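/- arXiv:1805.04673 — 2 statements merged into one kernel-verified Lean document; each statement's English description precedes it below -/
import Mathlib

section
/- Let N be an odd positive integer, θ ∈ (0, π/2), k ∈ {0, 1, …, 2N−1}, λ_k = exp(πik/N), C = 2N/(1 + (−1)^k·cos^N θ), and let ρ_k be the 2×2 matrix with entries (ρ_k)_{c,c'} = (1/C)·Σ_{n=0}^{N−1} v_c(n)·conj(v_{c'}(n)), where v_0(n) = a_n(λ_k) and v_1(n) = b_n(λ_k). Then the linear entropy satisfies 1 − Tr(ρ_k²) = (1 − cos^(2N−2)θ)/2. -/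
open Complex


private lemma psw_sum_inv_add_prim (N : ℕ) (hN : Odd N) (hN0 : N ≠ 0) (ζ : ℂ)
    (hζ : IsPrimitiveRoot ζ N) (x : ℂ) (hx : x ^ N + 1 ≠ 0) :
    ∑ n ∈ Finset.range N, (x + ζ ^ n)⁻¹ = N * x ^ (N - 1) / (x ^ N + 1) := by
  have hζN : ζ ^ N = 1 := hζ.pow_eq_one
  have hxn : ∀ n : ℕ, x + ζ ^ n ≠ 0 := by
    intro n h
    apply hx
    have hxe : x = -(ζ ^ n) := by linear_combination h
    rw [hxe, hN.neg_pow, ← pow_mul, mul_comm n N, pow_mul, hζN, one_pow]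
    ring
  have key : ∀ n : ℕ, (x + ζ ^ n)⁻¹
      = (∑ j ∈ Finset.range N, x ^ j * (-(ζ ^ n)) ^ (N - 1 - j)) / (x ^ N + 1) := by
    intro n
    have h := geom_sum₂_mul x (-(ζ ^ n)) N
    have h2 : (∑ j ∈ Finset.range N, x ^ j * (-(ζ ^ n)) ^ (N - 1 - j)) * (x + ζ ^ n)
        = x ^ N + 1 := by
      rw [show x + ζ ^ n = x - -(ζ^n) by ring, h, hN.neg_pow, ← pow_mul, mul_comm n N,
        pow_mul, hζN, one_pow]; ring
    field_simp [hxn n]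
    linear_combination -h2
  rw [Finset.sum_congr rfl fun n _ => key n, ← Finset.sum_div]
  congr 1
  rw [Finset.sum_comm]
  rw [Finset.sum_eq_single (N - 1)]
  · have : ∀ n ∈ Finset.range N, x ^ (N-1) * (-(ζ ^ n)) ^ (N - 1 - (N-1)) = x ^ (N-1) := by
      intro n _; simp [Nat.sub_self]
    rw [Finset.sum_congr rfl this, Finset.sum_const, Finset.card_range]; ring
  · intro j hj hjne
    have hjlt : j < N := Finset.mem_range.mp hj
    have h1 : 0 < N - 1 - j := by omega
    have h2 : N - 1 - j < N := by omega
    have : ∀ n ∈ Finset.range N, x ^ j * (-(ζ ^ n)) ^ (N - 1 - j)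
        = (x ^ j * (-1) ^ (N - 1 - j)) * (ζ ^ (N - 1 - j)) ^ n := by
      intro n _
      rw [neg_pow, ← pow_mul, mul_comm n, pow_mul]; ring
    rw [Finset.sum_congr rfl this, ← Finset.mul_sum]
    rw [geom_sum_eq (hζ.pow_ne_one_of_pos_of_lt h1.ne' h2)]
    rw [← pow_mul, mul_comm (N-1-j) N, pow_mul, hζN, one_pow]
    simp
  · intro h; exfalso; apply h; simp [Finset.mem_range]; omega

private lemma psw_sum_inv_mu_add (N : ℕ) (hN : Odd N) (hN0 : N ≠ 0) (ζ : ℂ)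
    (hζ : IsPrimitiveRoot ζ N) (lam μ : ℂ) (hlam : lam ≠ 0)
    (h : μ ^ N + lam ^ N ≠ 0) :
    ∑ n ∈ Finset.range N, (μ + lam * ζ ^ n)⁻¹ = N * μ ^ (N - 1) / (μ ^ N + lam ^ N) := by
  have hlN : lam ^ N ≠ 0 := pow_ne_zero _ hlam
  have hx : (μ / lam) ^ N + 1 ≠ 0 := by
    rw [div_pow]
    intro h0
    apply h
    have := mul_eq_zero_of_left h0 (lam ^ N)
    field_simp at this
    linear_combination this
  have hterm : ∀ n : ℕ, (μ + lam * ζ ^ n)⁻¹ = lam⁻¹ * (μ / lam + ζ ^ n)⁻¹ := by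
    intro n
    rw [← mul_inv]
    field_simp
  rw [Finset.sum_congr rfl fun n _ => hterm n, ← Finset.mul_sum,
    psw_sum_inv_add_prim N hN hN0 ζ hζ _ hx, div_pow, div_pow]
  have hlN1 : lam ^ (N - 1) ≠ 0 := pow_ne_zero _ hlam
  have hNN : lam ^ N = lam ^ (N - 1) * lam := by
    rw [← pow_succ]; congr 1; omega
  field_simp
  rw [hNN]
  ring

set_option maxHeartbeats 1000000 in
private lemma psw_endgame (n c m σ : ℂ) (hσ : σ = 1 ∨ σ = -1) (hn : n ≠ 0) (hc : c ≠ 0)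
    (h1 : 1 + σ*(c*m) ≠ 0) (h2 : c*m + σ ≠ 0) (h3 : 1 + c*m*σ ≠ 0) :
    1 - (1/(2*n/(1+σ*(c*m))) * n * (1/(2*n/(1+σ*(c*m))) * n) +
      (1-c^2) * (1/(2*n/(1+σ*(c*m))) * (1/(2*n/(1+σ*(c*m)))) * (n*m/(c*m+σ) * (n*m/(c*m+σ)))) +
      ((1-c^2) * (1/(2*n/(1+σ*(c*m))) * (1/(2*n/(1+σ*(c*m)))) * (n*m/(c*m+σ) * (n*m/(c*m+σ)))) +
       1/(2*n/(1+σ*(c*m))) * (n/(1+c*m*σ) - c*(n*m/(c*m+σ))) *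
       (1/(2*n/(1+σ*(c*m))) * (n/(1+c*m*σ) - c*(n*m/(c*m+σ)))))) = (1-m^2)/2 := by
  rw [one_div_div]
  rcases hσ with h|h <;> subst h
  · rw [show c*m + 1 = 1 + c*m from add_comm _ _,
        show 1 + c*m*1 = 1 + c*m from by ring,
        show (1:ℂ) + 1*(c*m) = 1 + c*m from by ring] at *
    rw [show (1+c*m)/(2*n) * n = (1+c*m)/2 from by field_simp [hn],
        show (1+c*m)/(2*n) * ((1+c*m)/(2*n)) * (n*m/(1+c*m) * (n*m/(1+c*m))) = m^2/4
          from by field_simp [hn, h1]; ring,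
        show (1+c*m)/(2*n) * (n/(1+c*m) - c*(n*m/(1+c*m))) = (1-c*m)/2
          from by field_simp [hn, h1]]
    ring
  · rw [show c*m + -1 = -(1 - c*m) from by ring,
        show 1 + c*m*-1 = 1 - c*m from by ring,
        show (1:ℂ) + -1*(c*m) = 1 - c*m from by ring] at *
    rw [neg_ne_zero] at h2
    rw [div_neg, neg_mul_neg]
    rw [show (1-c*m)/(2*n) * n = (1-c*m)/2 from by field_simp [hn],
        show (1-c*m)/(2*n) * ((1-c*m)/(2*n)) * (n*m/(1-c*m) * (n*m/(1-c*m))) = m^2/4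
          from by field_simp [hn, h2]; ring,
        show (1-c*m)/(2*n) * (n/(1-c*m) - c * -(n*m/(1-c*m))) = (1+c*m)/2
          from by field_simp [hn, h2]; ring]
    ring

/-- `ω = exp(2πi/N)`. -/
noncomputable def omegaN (N : ℕ) : ℂ := Complex.exp (2 * Real.pi * Complex.I / N)

/-- `a_n(λ) = ω^(−n(n−1)/2) · ∏_{j=0}^{n−1} (1 + λ⁻¹ωʲ/cosθ)/(1 + λω⁻ʲ/cosθ)`. -/
noncomputable def aCoef (N : ℕ) (θ : ℝ) (lam : ℂ) (n : ℕ) : ℂ :=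
  (omegaN N)⁻¹ ^ (n * (n - 1) / 2) *
    ∏ j ∈ Finset.range n,
      (1 + lam⁻¹ * omegaN N ^ j / (Real.cos θ : ℂ)) /
      (1 + lam * (omegaN N)⁻¹ ^ j / (Real.cos θ : ℂ))

/-- `b_n(λ) = a_n(λ)·tanθ/(1 + λω⁻ⁿ/cosθ)`. -/
noncomputable def bCoef (N : ℕ) (θ : ℝ) (lam : ℂ) (n : ℕ) : ℂ :=
  aCoef N θ lam n * (Real.tan θ : ℂ) / (1 + lam * (omegaN N)⁻¹ ^ n / (Real.cos θ : ℂ))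

/-- The reduced density matrix of the coin in the normalized eigenstate with
eigenvalue `λ`: `(ρ)_{c,c'} = (1/C)·Σ_{n<N} v_c(n)·conj(v_{c'}(n))` where
`v_0(n) = a_n(λ)` and `v_1(n) = b_n(λ)`. -/
noncomputable def coinRho (N : ℕ) (θ : ℝ) (lam : ℂ) (C : ℂ) :
    Matrix (Fin 2) (Fin 2) ℂ := fun c c' =>
  (1 / C) * ∑ n ∈ Finset.range N,
    (if c = 0 then aCoef N θ lam n else bCoef N θ lam n) *
      (starRingEnd ℂ) (if c' = 0 then aCoef N θ lam n else bCoef N θ lam n)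

set_option maxHeartbeats 2000000 in
/-- the linear entropy of the coin reduced density matrix satisfies
`1 − Tr(ρ_k²) = (1 − cos^(2N−2)θ)/2`. -/
theorem psw_coin_rho_linear_entropy (N : ℕ) [NeZero N] (hN : Odd N)
    (θ : ℝ) (hθ : θ ∈ Set.Ioo 0 (Real.pi / 2))
    (k : ℕ) (hk : k < 2 * N)
    (lam : ℂ) (hlam : lam = Complex.exp (Real.pi * Complex.I * k / N))
    (C : ℂ) (hC : C = 2 * N / (1 + (-1 : ℂ) ^ k * (Real.cos θ : ℂ) ^ N)) :
    1 - (coinRho N θ lam C * coinRho N θ lam C).trace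
      = (((1 - Real.cos θ ^ (2 * N - 2)) / 2 : ℝ) : ℂ) := by
  obtain ⟨θpos, θlt⟩ := hθ
  have hN0 : N ≠ 0 := NeZero.ne N
  have hNC : (N : ℂ) ≠ 0 := Nat.cast_ne_zero.mpr hN0
  -- real trigonometric facts
  have hcpos : 0 < Real.cos θ := Real.cos_pos_of_mem_Ioo ⟨by linarith [Real.pi_pos], θlt⟩
  have hclt : Real.cos θ < 1 := by
    have h := Real.cos_lt_cos_of_nonneg_of_le_pi (le_refl (0:ℝ))
      (by linarith [Real.pi_pos]) θpos
    simpa using h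
  set ω : ℂ := omegaN N with hω_def
  set c : ℂ := (Real.cos θ : ℂ) with hc_def
  set t : ℂ := (Real.tan θ : ℂ) with ht_def
  set s : ℂ := (-1 : ℂ) ^ k with hs_def
  have hcne : c ≠ 0 := by
    rw [hc_def]; exact Complex.ofReal_ne_zero.mpr (ne_of_gt hcpos)
  have hconjc : (starRingEnd ℂ) c = c := by rw [hc_def]; exact Complex.conj_ofReal _
  have hconjt : (starRingEnd ℂ) t = t := by rw [ht_def]; exact Complex.conj_ofReal _
  -- ω and lam basic facts
  have hω_prim : IsPrimitiveRoot ω N := by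
    rw [hω_def, omegaN]; exact Complex.isPrimitiveRoot_exp N hN0
  have hωi_prim : IsPrimitiveRoot ω⁻¹ N := hω_prim.inv
  have habsω : ‖ω‖ = 1 := by
    rw [hω_def, omegaN,
      show (2 * (Real.pi:ℂ) * Complex.I / (N:ℂ)) = ((2 * Real.pi / N : ℝ) : ℂ) * Complex.I
        by push_cast; ring]
    exact Complex.norm_exp_ofReal_mul_I _
  have hωne : ω ≠ 0 := by
    intro h; rw [h] at habsω; simp at habsω
  have habslam : ‖lam‖ = 1 := by
    rw [hlam,
      show ((Real.pi:ℂ) * Complex.I * k / N) = ((Real.pi * k / N : ℝ) : ℂ) * Complex.I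
        by push_cast; ring]
    exact Complex.norm_exp_ofReal_mul_I _
  have hlamne : lam ≠ 0 := by rw [hlam]; exact Complex.exp_ne_zero _
  have hconjω : (starRingEnd ℂ) ω = ω⁻¹ :=
    (Complex.inv_eq_conj (by rw [habsω])).symm
  have hconjlam : (starRingEnd ℂ) lam = lam⁻¹ :=
    (Complex.inv_eq_conj (by rw [habslam])).symm
  have hlamN : lam ^ N = s := by
    rw [hlam, ← Complex.exp_nat_mul,
      show (N:ℂ) * ((Real.pi:ℂ) * Complex.I * k / N) = (k:ℂ) * ((Real.pi:ℂ) * Complex.I)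
        by field_simp,
      Complex.exp_nat_mul, Complex.exp_pi_mul_I, hs_def]
  have hss : s * s = 1 := by rw [hs_def, ← mul_pow]; norm_num
  have hsre : s = 1 ∨ s = -1 := by
    rcases Nat.even_or_odd k with h | h
    · left; rw [hs_def]; exact h.neg_one_pow
    · right; rw [hs_def]; exact h.neg_one_pow
  have hlamiN : (lam⁻¹) ^ N = s := by
    rw [inv_pow, hlamN]
    rcases hsre with h | h <;> rw [h] <;> norm_num
  -- nonvanishing facts
  have hcNlt : Real.cos θ ^ N < 1 := pow_lt_one₀ hcpos.le hclt hN0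
  have hcNpos : 0 < Real.cos θ ^ N := pow_pos hcpos N
  have hcpow : ∀ m : ℕ, c ^ m = ((Real.cos θ ^ m : ℝ) : ℂ) := by
    intro m; rw [hc_def]; push_cast; ring
  have hscne : (1 : ℂ) + c ^ N * s ≠ 0 := by
    rcases hsre with h | h <;> rw [h, hcpow N] <;> intro h0
    · have : ((1 + Real.cos θ ^ N : ℝ) : ℂ) = 0 := by simp only [Complex.ofReal_add, Complex.ofReal_sub, Complex.ofReal_one]; linear_combination h0
      rw [Complex.ofReal_eq_zero] at this; linarith
    · have : ((1 - Real.cos θ ^ N : ℝ) : ℂ) = 0 := by simp only [Complex.ofReal_add, Complex.ofReal_sub, Complex.ofReal_one]; linear_combination h0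
      rw [Complex.ofReal_eq_zero] at this; linarith
  have hcsne : c ^ N + s ≠ 0 := by
    rcases hsre with h | h <;> rw [h, hcpow N] <;> intro h0
    · have : ((Real.cos θ ^ N + 1 : ℝ) : ℂ) = 0 := by simp only [Complex.ofReal_add, Complex.ofReal_sub, Complex.ofReal_one]; linear_combination h0
      rw [Complex.ofReal_eq_zero] at this; linarith
    · have : ((Real.cos θ ^ N - 1 : ℝ) : ℂ) = 0 := by simp only [Complex.ofReal_add, Complex.ofReal_sub, Complex.ofReal_one]; linear_combination h0
      rw [Complex.ofReal_eq_zero] at this; linarith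
  have hCne : C ≠ 0 := by
    rw [hC]
    apply div_ne_zero
    · exact mul_ne_zero two_ne_zero hNC
    · intro h0; exact hscne (by linear_combination h0)
  -- unit-circle nonvanishing helpers
  have habs_u1 : ∀ n : ℕ, ‖lam * (ω⁻¹) ^ n‖ = 1 := by
    intro n; rw [norm_mul, norm_pow, norm_inv, habsω, habslam]; norm_num
  have habs_u2 : ∀ n : ℕ, ‖lam⁻¹ * ω ^ n‖ = 1 := by
    intro n; rw [norm_mul, norm_pow, norm_inv, habsω, habslam]; norm_num
  have key_ne : ∀ u : ℂ, ‖u‖ = 1 → (1 : ℂ) + u / c ≠ 0 := by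
    intro u hu h0
    have h0' : u = -c := by field_simp [hcne] at h0; linear_combination h0
    have h2 := congrArg norm h0'
    rw [hu, norm_neg, hc_def, Complex.norm_real, Real.norm_eq_abs, abs_of_pos hcpos] at h2
    linarith
  have key_ne2 : ∀ u : ℂ, ‖u‖ = 1 → c + u ≠ 0 := by
    intro u hu h0
    have h0' : u = -c := by linear_combination h0
    have h2 := congrArg norm h0'
    rw [hu, norm_neg, hc_def, Complex.norm_real, Real.norm_eq_abs, abs_of_pos hcpos] at h2
    linarith
  have key_ne3 : ∀ u : ℂ, ‖u‖ = 1 → (1 : ℂ) + c * u ≠ 0 := by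
    intro u hu h0
    have h0' : c * u = -1 := by linear_combination h0
    have h2 := congrArg norm h0'
    rw [norm_mul, hu, mul_one, hc_def, Complex.norm_real, Real.norm_eq_abs, abs_of_pos hcpos,
      norm_neg, norm_one] at h2
    linarith
  -- conjugation of factors
  have hconj_num : ∀ j : ℕ, (starRingEnd ℂ) (1 + lam⁻¹ * ω ^ j / c) = 1 + lam * (ω⁻¹) ^ j / c := by
    intro j
    simp only [map_add, map_one, map_div₀, map_mul, map_pow, map_inv₀, hconjω, hconjlam,
      inv_inv, hconjc]
  have hconj_den : ∀ j : ℕ, (starRingEnd ℂ) (1 + lam * (ω⁻¹) ^ j / c) = 1 + lam⁻¹ * ω ^ j / c := by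
    intro j
    simp only [map_add, map_one, map_div₀, map_mul, map_pow, map_inv₀, hconjω, hconjlam,
      inv_inv, hconjc]
  have hnum_ne : ∀ j : ℕ, (1 : ℂ) + lam⁻¹ * ω ^ j / c ≠ 0 := fun j => key_ne _ (habs_u2 j)
  have hden_ne : ∀ j : ℕ, (1 : ℂ) + lam * (ω⁻¹) ^ j / c ≠ 0 := fun j => key_ne _ (habs_u1 j)
  -- pointwise products
  have haa : ∀ n : ℕ, aCoef N θ lam n * (starRingEnd ℂ) (aCoef N θ lam n) = 1 := by
    intro n
    rw [aCoef, ← hω_def, ← hc_def]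
    rw [map_mul, map_pow, map_prod, map_inv₀, hconjω, inv_inv]
    rw [mul_mul_mul_comm, ← mul_pow, inv_mul_cancel₀ hωne, one_pow, one_mul,
      ← Finset.prod_mul_distrib]
    apply Finset.prod_eq_one
    intro j _
    rw [map_div₀, hconj_num j, hconj_den j, div_mul_div_comm,
      mul_comm ((1:ℂ) + lam⁻¹ * ω ^ j / c)]
    exact div_self (mul_ne_zero (hden_ne j) (hnum_ne j))
  have expand1 : ∀ A B X Y : ℂ, A * (B * Y / X) = A * B * (Y * X⁻¹) := by intros; ring
  have expand2 : ∀ A B X Y : ℂ, A * Y / X * B = A * B * (Y * X⁻¹) := by intros; ring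
  have expand3 : ∀ A B X Y T : ℂ, A * T / X * (B * T / Y) = A * B * (T * X⁻¹ * (T * Y⁻¹)) := by
    intros; ring
  have hab : ∀ n : ℕ, aCoef N θ lam n * (starRingEnd ℂ) (bCoef N θ lam n)
      = t * (1 + lam⁻¹ * ω ^ n / c)⁻¹ := by
    intro n
    rw [bCoef, ← hω_def, ← hc_def, ← ht_def, map_div₀, map_mul, hconjt, hconj_den n,
      expand1, haa n, one_mul]
  have hba : ∀ n : ℕ, bCoef N θ lam n * (starRingEnd ℂ) (aCoef N θ lam n)
      = t * (1 + lam * (ω⁻¹) ^ n / c)⁻¹ := by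
    intro n
    rw [bCoef, ← hω_def, ← hc_def, ← ht_def, expand2, haa n, one_mul]
  -- tan squared identity
  have ht2c : t ^ 2 * c ^ 2 = 1 - c ^ 2 := by
    have hre : Real.tan θ ^ 2 * Real.cos θ ^ 2 = 1 - Real.cos θ ^ 2 := by
      rw [Real.tan_eq_sin_div_cos, div_pow]
      field_simp
      linear_combination Real.sin_sq_add_cos_sq θ
    have h2 := congrArg (fun r : ℝ => (r : ℂ)) hre
    simp only [Complex.ofReal_mul, Complex.ofReal_pow, Complex.ofReal_sub,
      Complex.ofReal_one] at h2
    rw [ht_def, hc_def]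
    exact h2
  have ht2' : t ^ 2 = (1 - c ^ 2) / c ^ 2 := by
    rw [eq_div_iff (pow_ne_zero 2 hcne)]; exact ht2c
  have hbb_key : ∀ x : ℂ, x ≠ 0 → 1 + x / c ≠ 0 → 1 + x⁻¹ / c ≠ 0 → c + x ≠ 0 →
      1 + c * x ≠ 0 →
      t * (1 + x / c)⁻¹ * (t * (1 + x⁻¹ / c)⁻¹) = (1 + c * x)⁻¹ - c * (c + x)⁻¹ := by
    intro x hx h1 h2 h3 h4
    have e1 : 1 + x / c = (c + x) / c := by field_simp
    have e2 : 1 + x⁻¹ / c = (1 + c * x) / (c * x) := by field_simp; ring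
    rw [show t * (1 + x / c)⁻¹ * (t * (1 + x⁻¹ / c)⁻¹)
        = t ^ 2 * ((1 + x / c)⁻¹ * (1 + x⁻¹ / c)⁻¹) from by ring, ht2', e1, e2,
      inv_div, inv_div]
    field_simp [hcne, hx, h3, h4]
    ring
  have hbb : ∀ n : ℕ, bCoef N θ lam n * (starRingEnd ℂ) (bCoef N θ lam n)
      = (1 + c * (lam * (ω⁻¹) ^ n))⁻¹ - c * (c + lam * (ω⁻¹) ^ n)⁻¹ := by
    intro n
    rw [bCoef, ← hω_def, ← hc_def, ← ht_def, map_div₀, map_mul, hconjt, hconj_den n,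
      expand3, haa n, one_mul]
    have hx0 : lam * (ω⁻¹) ^ n ≠ 0 :=
      mul_ne_zero hlamne (pow_ne_zero _ (inv_ne_zero hωne))
    have hxi : (lam * (ω⁻¹) ^ n)⁻¹ = lam⁻¹ * ω ^ n := by
      rw [mul_inv, inv_pow, inv_inv]
    rw [show (1:ℂ) + lam⁻¹ * ω ^ n / c = 1 + (lam * (ω⁻¹) ^ n)⁻¹ / c from by rw [hxi]]
    exact hbb_key _ hx0 (hden_ne n) (by rw [hxi]; exact hnum_ne n)
      (key_ne2 _ (habs_u1 n)) (key_ne3 _ (habs_u1 n))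
  -- the (1 + y/c)⁻¹ = c(c+y)⁻¹ trick
  have hptc : ∀ y : ℂ, ((1:ℂ) + y / c)⁻¹ = c * (c + y)⁻¹ := by
    intro y
    rw [show (1:ℂ) + y / c = (c + y) / c from by rw [add_div, div_self hcne], inv_div,
      div_eq_mul_inv]
  -- the four sums
  have hSaa : ∑ n ∈ Finset.range N, aCoef N θ lam n * (starRingEnd ℂ) (aCoef N θ lam n)
      = (N : ℂ) := by
    rw [Finset.sum_congr rfl fun n _ => haa n, Finset.sum_const, Finset.card_range,
      nsmul_eq_mul, mul_one]
  have hSab : ∑ n ∈ Finset.range N, aCoef N θ lam n * (starRingEnd ℂ) (bCoef N θ lam n)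
      = t * (c * ((N : ℂ) * c ^ (N - 1) / (c ^ N + s))) := by
    rw [Finset.sum_congr rfl fun n _ => hab n, ← Finset.mul_sum]
    congr 1
    rw [Finset.sum_congr rfl fun n _ => hptc (lam⁻¹ * ω ^ n), ← Finset.mul_sum]
    congr 1
    have h := psw_sum_inv_mu_add N hN hN0 ω hω_prim lam⁻¹ c (inv_ne_zero hlamne)
      (by rw [hlamiN]; exact hcsne)
    rw [hlamiN] at h
    exact h
  have hSba : ∑ n ∈ Finset.range N, bCoef N θ lam n * (starRingEnd ℂ) (aCoef N θ lam n)
      = t * (c * ((N : ℂ) * c ^ (N - 1) / (c ^ N + s))) := by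
    rw [Finset.sum_congr rfl fun n _ => hba n, ← Finset.mul_sum]
    congr 1
    rw [Finset.sum_congr rfl fun n _ => hptc (lam * (ω⁻¹) ^ n), ← Finset.mul_sum]
    congr 1
    have h := psw_sum_inv_mu_add N hN hN0 ω⁻¹ hωi_prim lam c hlamne
      (by rw [hlamN]; exact hcsne)
    rw [hlamN] at h
    exact h
  have hSbb : ∑ n ∈ Finset.range N, bCoef N θ lam n * (starRingEnd ℂ) (bCoef N θ lam n)
      = (N : ℂ) / (1 + c ^ N * s) - c * ((N : ℂ) * c ^ (N - 1) / (c ^ N + s)) := by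
    rw [Finset.sum_congr rfl fun n _ => hbb n, Finset.sum_sub_distrib, ← Finset.mul_sum]
    have e1 : ∀ n ∈ Finset.range N, (1 + c * (lam * (ω⁻¹) ^ n))⁻¹
        = ((1:ℂ) + c * lam * (ω⁻¹) ^ n)⁻¹ := by
      intro n _; rw [mul_assoc]
    rw [Finset.sum_congr rfl e1]
    have h1 := psw_sum_inv_mu_add N hN hN0 ω⁻¹ hωi_prim (c * lam) 1
      (mul_ne_zero hcne hlamne)
      (by rw [one_pow, mul_pow, hlamN]; intro h0; exact hscne (by linear_combination h0))
    have h2 := psw_sum_inv_mu_add N hN hN0 ω⁻¹ hωi_prim lam c hlamne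
      (by rw [hlamN]; exact hcsne)
    rw [mul_pow, hlamN, one_pow] at h1
    rw [hlamN] at h2
    rw [h1, h2]
    norm_num
  have htr : (coinRho N θ lam C * coinRho N θ lam C).trace
      = (1 / C * (N : ℂ)) * (1 / C * (N : ℂ))
        + (1 / C * (t * (c * ((N : ℂ) * c ^ (N - 1) / (c ^ N + s)))))
          * (1 / C * (t * (c * ((N : ℂ) * c ^ (N - 1) / (c ^ N + s)))))
        + ((1 / C * (t * (c * ((N : ℂ) * c ^ (N - 1) / (c ^ N + s)))))
            * (1 / C * (t * (c * ((N : ℂ) * c ^ (N - 1) / (c ^ N + s)))))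
          + (1 / C * ((N : ℂ) / (1 + c ^ N * s) - c * ((N : ℂ) * c ^ (N - 1) / (c ^ N + s))))
            * (1 / C * ((N : ℂ) / (1 + c ^ N * s) - c * ((N : ℂ) * c ^ (N - 1) / (c ^ N + s))))) := by
    simp only [coinRho, Matrix.trace, Matrix.mul_apply, Fin.sum_univ_two, Matrix.diag,
      Fin.isValue, one_ne_zero, if_true, if_false]
    rw [hSaa, hSab, hSba, hSbb]
  have hNpow : c ^ N = c * c ^ (N - 1) := by
    conv_lhs => rw [show N = (N - 1) + 1 from by omega, pow_succ]
    exact mul_comm _ _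
  have hexp2 : Real.cos θ ^ (2 * N - 2) = (Real.cos θ ^ (N - 1)) ^ 2 := by
    rw [← pow_mul]; congr 1; omega
  have hRHS : (((1 - Real.cos θ ^ (2 * N - 2)) / 2 : ℝ) : ℂ)
      = (1 - (c ^ (N - 1)) ^ 2) / 2 := by
    rw [hexp2, hc_def]
    simp only [Complex.ofReal_div, Complex.ofReal_sub, Complex.ofReal_one,
      Complex.ofReal_pow, Complex.ofReal_ofNat]
  have hcross : ∀ u A : ℂ, (u * (t * (c * A))) * (u * (t * (c * A)))
      = (1 - c ^ 2) * (u * u * (A * A)) := by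
    intro u A; linear_combination (u * u * A * A) * ht2c
  rw [htr, hcross, hRHS, hC]
  have hscne' : (1 : ℂ) + s * (c * c ^ (N - 1)) ≠ 0 := by
    rw [← hNpow]; intro h0; exact hscne (by linear_combination h0)
  have hcsne' : c * c ^ (N - 1) + s ≠ 0 := by rw [← hNpow]; exact hcsne
  rw [hNpow]
  rw [hNpow] at hscne
  exact psw_endgame (N:ℂ) c (c ^ (N-1)) s hsre hNC hcne hscne' hcsne' hscne
end

section
/- Let θ ∈ (0, π/2) and let M be a positive integer. Then ∫_0^1 tan²θ · cos(2πMx) / (1 + sec²θ + 2·secθ·cos(2πx)) dx = (−cosθ)^M, and for M = 0 the same integral equals 1. -/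
open Real Finset MeasureTheory

private lemma cos_int_integral (k : ℤ) :
    ∫ x in (0:ℝ)..1, Real.cos ((k : ℝ) * (2 * π * x)) = if k = 0 then 1 else 0 := by
  rcases eq_or_ne k 0 with hk | hk
  · simp [hk]
  · simp only [hk, if_neg]
    have hk' : (k:ℝ) ≠ 0 := Int.cast_ne_zero.mpr hk
    have hc : (2 * π * (k:ℝ)) ≠ 0 := by positivity
    have h1 : (fun x : ℝ => Real.cos ((k:ℝ) * (2*π*x))) = fun x => Real.cos ((2*π*(k:ℝ)) * x) := by
      funext x; ring_nf
    rw [h1, intervalIntegral.integral_comp_mul_left Real.cos hc]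
    have h2 : 2*π*(k:ℝ) = ((2*k : ℤ):ℝ)*π := by push_cast; ring
    have h3 : Real.sin (2*π*(k:ℝ)) = 0 := by rw [h2]; exact Real.sin_int_mul_pi _
    simp [h3]

private lemma cos_ortho (a b : ℕ) :
    ∫ x in (0:ℝ)..1, Real.cos ((a:ℝ) * (2*π*x)) * Real.cos ((b:ℝ) * (2*π*x))
      = if a = b then (if a = 0 then (1:ℝ) else 1/2) else 0 := by
  have key : ∀ x : ℝ, Real.cos ((a:ℝ)*(2*π*x)) * Real.cos ((b:ℝ)*(2*π*x))
      = (Real.cos ((((a:ℤ) - b : ℤ):ℝ)*(2*π*x)) + Real.cos ((((a:ℤ)+b : ℤ):ℝ)*(2*π*x))) / 2 := by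
    intro x
    have h := Real.two_mul_cos_mul_cos ((a:ℝ)*(2*π*x)) ((b:ℝ)*(2*π*x))
    have e1 : ((((a:ℤ) - b : ℤ)):ℝ)*(2*π*x) = (a:ℝ)*(2*π*x) - (b:ℝ)*(2*π*x) := by push_cast; ring
    have e2 : ((((a:ℤ) + b : ℤ)):ℝ)*(2*π*x) = (a:ℝ)*(2*π*x) + (b:ℝ)*(2*π*x) := by push_cast; ring
    rw [e1, e2]; linarith
  simp_rw [key]
  rw [intervalIntegral.integral_div]
  have i1 : IntervalIntegrable (fun x => Real.cos ((((a:ℤ) - b : ℤ):ℝ)*(2*π*x))) MeasureTheory.volume 0 1 := by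
    apply Continuous.intervalIntegrable; continuity
  have i2 : IntervalIntegrable (fun x => Real.cos ((((a:ℤ) + b : ℤ):ℝ)*(2*π*x))) MeasureTheory.volume 0 1 := by
    apply Continuous.intervalIntegrable; continuity
  rw [intervalIntegral.integral_add i1 i2, cos_int_integral, cos_int_integral]
  rcases eq_or_ne a b with rfl | hab
  · rcases eq_or_ne a 0 with rfl | ha0
    · norm_num
    · have : ((a:ℤ) + a) ≠ 0 := by positivity
      simp [this, ha0]
  · have h1 : ((a:ℤ) - b) ≠ 0 := by
      simp [sub_eq_zero]; exact_mod_cast hab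
    have h2 : ((a:ℤ) + b) ≠ 0 ∨ (a = 0 ∧ b = 0) := by omega
    rcases h2 with h2 | ⟨rfl, rfl⟩
    · simp [h1, h2, hab]
    · simp at hab

private lemma poisson_id (r : ℝ) (C : ℕ → ℝ) (hC0 : C 0 = 1)
    (hC : ∀ n, C (n+2) + C n = 2 * C 1 * C (n+1)) (N : ℕ) :
    1 - r^2 = (1 + r^2 - 2*r*C 1) * (1 + 2*∑ n ∈ Finset.range N, r^(n+1) * C (n+1))
      + 2*r^(N+1)*(C (N+1) - r * C N) := by
  induction N with
  | zero => simp [hC0]; ring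
  | succ N ih =>
    rw [Finset.sum_range_succ]
    linear_combination ih - 2*r^(N+2) * (hC N)

private lemma key_integral (c : ℝ) (hc0 : 0 < c) (hc1 : c < 1) (M : ℕ) :
    ∫ x in (0:ℝ)..1, (1 - c^2) * Real.cos ((M:ℝ)*(2*π*x)) /
        (1 + c^2 + 2*c*Real.cos (2*π*x)) = (-c)^M := by
  set D : ℝ → ℝ := fun x => 1 + c^2 + 2*c*Real.cos (2*π*x) with hDdef
  have hDpos : ∀ x, 0 < D x := by
    intro x
    have h1 := Real.neg_one_le_cos (2*π*x)
    have h2 := Real.cos_le_one (2*π*x)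
    simp only [hDdef]; nlinarith
  have hcontD : Continuous D := by fun_prop
  set I : ℝ := ∫ x in (0:ℝ)..1, (1 - c^2) * Real.cos ((M:ℝ)*(2*π*x)) / D x with hIdef
  have bound : ∀ N : ℕ, M ≤ N → |I - (-c)^M| ≤ 2*(1+c)/(1-c)^2 * c^(N+1) := by
    intro N hMN
    -- pointwise identity
    have hpt : ∀ x : ℝ, (1 - c^2) * Real.cos ((M:ℝ)*(2*π*x)) / D x =
        (Real.cos ((M:ℝ)*(2*π*x)) + 2*∑ n ∈ Finset.range N,
            (-c)^(n+1) * (Real.cos (((n+1:ℕ):ℝ)*(2*π*x)) * Real.cos ((M:ℝ)*(2*π*x))))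
        + 2*(-c)^(N+1)*(Real.cos (((N+1:ℕ):ℝ)*(2*π*x)) - (-c)*Real.cos (((N:ℕ):ℝ)*(2*π*x)))
            * Real.cos ((M:ℝ)*(2*π*x)) / D x := by
      intro x
      have hp := poisson_id (-c) (fun n => Real.cos ((n:ℝ)*(2*π*x))) (by norm_num)
        (by
          intro n
          have e1 : ((n:ℝ)+2)*(2*π*x) = ((n:ℝ)+1)*(2*π*x) + (2*π*x) := by ring
          have e2 : (n:ℝ)*(2*π*x) = ((n:ℝ)+1)*(2*π*x) - (2*π*x) := by ring
          push_cast
          rw [e1, e2, Real.cos_add, Real.cos_sub, one_mul]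
          ring) N
      simp only [Nat.cast_one, one_mul] at hp
      have hDx : D x ≠ 0 := (hDpos x).ne'
      have hDeq : (1 + (-c)^2 - 2*(-c)*Real.cos (2*π*x)) = D x := by
        simp only [hDdef]; ring
      rw [hDeq] at hp
      push_cast at hp ⊢
      have hsum : (∑ n ∈ Finset.range N, (-c)^(n+1) *
            (Real.cos (((n:ℝ)+1)*(2*π*x)) * Real.cos ((M:ℝ)*(2*π*x))))
          = (∑ n ∈ Finset.range N, (-c)^(n+1) * Real.cos (((n:ℝ)+1)*(2*π*x)))
              * Real.cos ((M:ℝ)*(2*π*x)) := by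
        rw [Finset.sum_mul]; exact Finset.sum_congr rfl (fun n _ => by ring)
      rw [hsum]
      rw [div_eq_iff hDx, add_mul, div_mul_cancel₀ _ hDx]
      linear_combination (Real.cos ((M:ℝ)*(2*π*x))) * hp
    rw [hIdef]
    rw [intervalIntegral.integral_congr (g := fun x =>
        (Real.cos ((M:ℝ)*(2*π*x)) + 2*∑ n ∈ Finset.range N,
            (-c)^(n+1) * (Real.cos (((n+1:ℕ):ℝ)*(2*π*x)) * Real.cos ((M:ℝ)*(2*π*x))))
        + 2*(-c)^(N+1)*(Real.cos (((N+1:ℕ):ℝ)*(2*π*x)) - (-c)*Real.cos (((N:ℕ):ℝ)*(2*π*x)))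
            * Real.cos ((M:ℝ)*(2*π*x)) / D x) (fun x _ => hpt x)]
    have int1 : IntervalIntegrable (fun x => Real.cos ((M:ℝ)*(2*π*x)) + 2*∑ n ∈ Finset.range N,
        (-c)^(n+1) * (Real.cos (((n+1:ℕ):ℝ)*(2*π*x)) * Real.cos ((M:ℝ)*(2*π*x)))) volume 0 1 := by
      apply Continuous.intervalIntegrable
      apply Continuous.add (by fun_prop)
      apply Continuous.mul continuous_const
      exact continuous_finset_sum _ (fun n _ => by fun_prop)
    have int2 : IntervalIntegrable (fun x =>
        2*(-c)^(N+1)*(Real.cos (((N+1:ℕ):ℝ)*(2*π*x)) - (-c)*Real.cos (((N:ℕ):ℝ)*(2*π*x)))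
            * Real.cos ((M:ℝ)*(2*π*x)) / D x) volume 0 1 := by
      apply Continuous.intervalIntegrable
      exact Continuous.div (by fun_prop) hcontD (fun x => (hDpos x).ne')
    rw [intervalIntegral.integral_add int1 int2]
    -- first integral equals (-c)^M
    have hfirst : (∫ x in (0:ℝ)..1, (Real.cos ((M:ℝ)*(2*π*x)) + 2*∑ n ∈ Finset.range N,
        (-c)^(n+1) * (Real.cos (((n+1:ℕ):ℝ)*(2*π*x)) * Real.cos ((M:ℝ)*(2*π*x)))))
        = (-c)^M := by
      have ia : IntervalIntegrable (fun x => Real.cos ((M:ℝ)*(2*π*x))) volume 0 1 := by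
        apply Continuous.intervalIntegrable; fun_prop
      have ib : IntervalIntegrable (fun x => 2*∑ n ∈ Finset.range N,
          (-c)^(n+1) * (Real.cos (((n+1:ℕ):ℝ)*(2*π*x)) * Real.cos ((M:ℝ)*(2*π*x)))) volume 0 1 := by
        apply Continuous.intervalIntegrable
        apply Continuous.mul continuous_const
        exact continuous_finset_sum _ (fun n _ => by fun_prop)
      rw [intervalIntegral.integral_add ia ib, intervalIntegral.integral_const_mul,
        intervalIntegral.integral_finset_sum (fun n _ => by
          apply Continuous.intervalIntegrable; fun_prop)]
      have e0 : (∫ x in (0:ℝ)..1, Real.cos ((M:ℝ)*(2*π*x))) = if M = 0 then 1 else 0 := by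
        have h := cos_int_integral (M:ℤ)
        push_cast at h
        simpa using h
      have e1 : ∀ n ∈ Finset.range N, (∫ x in (0:ℝ)..1,
          (-c)^(n+1) * (Real.cos (((n+1:ℕ):ℝ)*(2*π*x)) * Real.cos ((M:ℝ)*(2*π*x))))
          = if n+1 = M then (-c)^(n+1) * (1/2) else 0 := by
        intro n _
        rw [intervalIntegral.integral_const_mul, cos_ortho (n+1) M]
        by_cases h : n+1 = M
        · subst h; simp
        · simp [h]
      rw [Finset.sum_congr rfl e1, e0]
      rcases M with _ | m
      · simp
      · have hm : m ∈ Finset.range N := Finset.mem_range.mpr (by omega)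
        have : ∀ n, (n+1 = m+1) = (n = m) := fun n => by simp
        simp_rw [this]
        rw [Finset.sum_ite_eq' (Finset.range N) m (fun n => (-c)^(n+1) * (1/2))]
        simp [hm]
        ring
    rw [hfirst]
    simp only [add_sub_cancel_left]
    -- bound the remainder integral
    have hb : ∀ x ∈ Set.uIoc (0:ℝ) 1,
        ‖2*(-c)^(N+1)*(Real.cos (((N+1:ℕ):ℝ)*(2*π*x)) - (-c)*Real.cos (((N:ℕ):ℝ)*(2*π*x)))
            * Real.cos ((M:ℝ)*(2*π*x)) / D x‖ ≤ 2*(1+c)*c^(N+1)/(1-c)^2 := by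
      intro x _
      rw [Real.norm_eq_abs, abs_div, abs_of_pos (hDpos x)]
      have hden : (1-c)^2 ≤ D x := by
        have h1 := Real.neg_one_le_cos (2*π*x)
        simp only [hDdef]; nlinarith
      have hnum : |2*(-c)^(N+1)*(Real.cos (((N+1:ℕ):ℝ)*(2*π*x)) - (-c)*Real.cos (((N:ℕ):ℝ)*(2*π*x)))
          * Real.cos ((M:ℝ)*(2*π*x))| ≤ 2*(1+c)*c^(N+1) := by
        have b1 := Real.abs_cos_le_one (((N+1:ℕ):ℝ)*(2*π*x))
        have b2 := Real.abs_cos_le_one (((N:ℕ):ℝ)*(2*π*x))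
        have b3 := Real.abs_cos_le_one ((M:ℝ)*(2*π*x))
        have hA : |Real.cos (((N+1:ℕ):ℝ)*(2*π*x)) - (-c)*Real.cos (((N:ℕ):ℝ)*(2*π*x))| ≤ 1 + c := by
          rw [abs_le] at *
          constructor <;> nlinarith
        calc |2*(-c)^(N+1)*(Real.cos (((N+1:ℕ):ℝ)*(2*π*x)) - (-c)*Real.cos (((N:ℕ):ℝ)*(2*π*x)))
              * Real.cos ((M:ℝ)*(2*π*x))|
            = 2 * c^(N+1) * |Real.cos (((N+1:ℕ):ℝ)*(2*π*x)) - (-c)*Real.cos (((N:ℕ):ℝ)*(2*π*x))|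
              * |Real.cos ((M:ℝ)*(2*π*x))| := by
              rw [abs_mul, abs_mul, abs_mul, abs_pow, abs_neg, abs_of_pos hc0]
              norm_num
          _ ≤ 2*(1+c)*c^(N+1) := by
              have hc' : (0:ℝ) ≤ c^(N+1) := by positivity
              nlinarith [mul_le_mul hA b3
                (abs_nonneg (Real.cos ((M:ℝ)*(2*π*x)))) (by linarith : (0:ℝ) ≤ 1+c),
                abs_nonneg (Real.cos (((N+1:ℕ):ℝ)*(2*π*x)) - (-c)*Real.cos (((N:ℕ):ℝ)*(2*π*x)))]
      calc _ ≤ (2*(1+c)*c^(N+1)) / (1-c)^2 :=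
            div_le_div₀ (by positivity) hnum (pow_pos (by linarith) 2) hden
        _ = 2*(1+c)*c^(N+1)/(1-c)^2 := by ring
    have := intervalIntegral.norm_integral_le_of_norm_le_const hb
    rw [Real.norm_eq_abs] at this
    calc |(∫ x in (0:ℝ)..1,
        2*(-c)^(N+1)*(Real.cos (((N+1:ℕ):ℝ)*(2*π*x)) - (-c)*Real.cos (((N:ℕ):ℝ)*(2*π*x)))
            * Real.cos ((M:ℝ)*(2*π*x)) / D x)| ≤ 2*(1+c)*c^(N+1)/(1-c)^2 * |1 - 0| := this
      _ = 2*(1+c)/(1-c)^2 * c^(N+1) := by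
            rw [abs_of_nonneg (by norm_num : (0:ℝ) ≤ 1 - 0)]; ring
  -- limit argument
  have hten : Filter.Tendsto (fun N : ℕ => 2*(1+c)/(1-c)^2 * c^(N+1)) Filter.atTop (nhds 0) := by
    have h1 : Filter.Tendsto (fun N : ℕ => c^(N+1)) Filter.atTop (nhds 0) :=
      (tendsto_pow_atTop_nhds_zero_of_lt_one hc0.le hc1).comp (Filter.tendsto_add_atTop_nat 1)
    simpa using h1.const_mul (2*(1+c)/(1-c)^2)
  have hle : |I - (-c)^M| ≤ 0 :=
    ge_of_tendsto hten (Filter.eventually_atTop.mpr ⟨M, fun N hN => bound N hN⟩)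
  have : I = (-c)^M := by
    have := abs_nonneg (I - (-c)^M)
    have h0 : |I - (-c)^M| = 0 := le_antisymm hle this
    have := abs_eq_zero.mp h0
    linarith
  simpa [hIdef] using this


/-- for `θ ∈ (0, π/2)` and a positive integer `M`,
`∫_0^1 tan²θ·cos(2πMx)/(1 + sec²θ + 2·secθ·cos(2πx)) dx = (−cosθ)^M`,
and for `M = 0` the same integral equals `1`. -/
theorem psw_fourier_integral (θ : ℝ) (hθ : θ ∈ Set.Ioo 0 (Real.pi / 2))
    (M : ℕ) (hM : 0 < M) :
    (∫ x in (0:ℝ)..1,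
        Real.tan θ ^ 2 * Real.cos (2 * Real.pi * M * x) /
          (1 + (1 / Real.cos θ) ^ 2 + 2 * (1 / Real.cos θ) * Real.cos (2 * Real.pi * x)))
      = (-Real.cos θ) ^ M ∧
    (∫ x in (0:ℝ)..1,
        Real.tan θ ^ 2 * Real.cos (2 * Real.pi * (0 : ℕ) * x) /
          (1 + (1 / Real.cos θ) ^ 2 + 2 * (1 / Real.cos θ) * Real.cos (2 * Real.pi * x)))
      = 1 := by
  obtain ⟨hθ0, hθ1⟩ := hθ
  have hπ := Real.pi_pos
  set c := Real.cos θ with hc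
  have hc0 : 0 < c := Real.cos_pos_of_mem_Ioo ⟨by linarith, hθ1⟩
  have hs : 0 < Real.sin θ := Real.sin_pos_of_pos_of_lt_pi hθ0 (by linarith)
  have hpyth := Real.sin_sq_add_cos_sq θ
  have hcle := Real.cos_le_one θ
  have hc1 : c < 1 := by nlinarith
  have main : ∀ K : ℕ, (∫ x in (0:ℝ)..1,
      Real.tan θ ^ 2 * Real.cos (2 * Real.pi * K * x) /
        (1 + (1 / Real.cos θ) ^ 2 + 2 * (1 / Real.cos θ) * Real.cos (2 * Real.pi * x)))
      = (-c) ^ K := by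
    intro K
    rw [← key_integral c hc0 hc1 K]
    apply intervalIntegral.integral_congr
    intro x _
    have hD : 0 < 1 + c^2 + 2*c*Real.cos (2*π*x) := by
      have h1 := Real.neg_one_le_cos (2*π*x)
      nlinarith
    have hsin2 : Real.sin θ ^ 2 = 1 - c ^ 2 := by nlinarith
    show Real.tan θ ^ 2 * Real.cos (2 * π * (K:ℝ) * x) /
        (1 + (1 / Real.cos θ) ^ 2 + 2 * (1 / Real.cos θ) * Real.cos (2 * π * x))
      = (1 - c ^ 2) * Real.cos ((K:ℝ) * (2 * π * x)) / (1 + c ^ 2 + 2 * c * Real.cos (2 * π * x))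
    have harg : 2 * π * (K:ℝ) * x = (K:ℝ) * (2 * π * x) := by ring
    rw [harg, Real.tan_eq_sin_div_cos, div_pow, hsin2, ← hc]
    have hden : 1 + (1 / c) ^ 2 + 2 * (1 / c) * Real.cos (2 * π * x)
        = (1 + c ^ 2 + 2 * c * Real.cos (2 * π * x)) / c ^ 2 := by
      field_simp; ring
    rw [hden]
    have h1 : c ≠ 0 := hc0.ne'
    have h2 : 1 + c ^ 2 + 2 * c * Real.cos (2 * π * x) ≠ 0 := hD.ne'
    field_simp
  exact ⟨main M, by rw [main 0]; norm_num⟩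
end
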